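/- Let φ be an N-function of class C¹([0,∞)) ∩ C²((0,∞)) satisfying φ'(t) ∼ t·φ''(t) uniformly in t > 0 (i.e. there are constants c₁, c₂ > 0 with c₁·t·φ''(t) ≤ φ'(t) ≤ c₂·t·φ''(t)). Then there exist constants C₁, C₂ > 0 such that for all z₁, z₂ ∈ ℝ^{Nn} with |z₁| + |z₂| > 0 and all μ ≥ 0: C₁·φ''(μ + |z₁| + |z₂|) ≤ ∫₀¹ ∫₀¹ t·φ''(μ + |z₁ + s·t·z₂|) ds dt ≤ C₂·φ''(μ + |z₁| + |z₂|). -/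

import Mathlib

open MeasureTheory Real Filter

def IsNFunction (φ φ' : ℝ → ℝ) : Prop :=
  ConvexOn ℝ (Set.Ici 0) φ ∧
  φ 0 = 0 ∧ φ' 0 = 0 ∧
  (∀ t : ℝ, 0 ≤ t → φ t = ∫ s in (0:ℝ)..t, φ' s) ∧
  (∀ t : ℝ, 0 ≤ t → ContinuousWithinAt φ' (Set.Ici t) t) ∧
  MonotoneOn φ' (Set.Ici 0) ∧
  (∀ t : ℝ, 0 < t → 0 < φ' t) ∧
  Tendsto φ' atTop atTop


/-- The Assumption: `φ` is an N-function of class `C¹([0,∞)) ∩ C²((0,∞))`,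
with derivative `φ'` and second derivative `φ''`. -/
def SatisfiesAssumption (φ φ' φ'' : ℝ → ℝ) : Prop :=
  IsNFunction φ φ' ∧
  (∀ t : ℝ, 0 ≤ t → HasDerivWithinAt φ (φ' t) (Set.Ici 0) t) ∧
  ContinuousOn φ' (Set.Ici 0) ∧
  (∀ t : ℝ, 0 < t → HasDerivAt φ' (φ'' t) t) ∧
  ContinuousOn φ'' (Set.Ioi 0)

private lemma phi_doubling (φ' φ'' : ℝ → ℝ) (c₁ : ℝ) (hc₁ : 0 < c₁)
    (hφ'der : ∀ t : ℝ, 0 < t → HasDerivAt φ' (φ'' t) t)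
    (hφ'pos : ∀ t : ℝ, 0 < t → 0 < φ' t)
    (hub : ∀ t : ℝ, 0 < t → c₁ * (t * φ'' t) ≤ φ' t)
    (n : ℕ) (hn : 1 / c₁ ≤ (n : ℝ)) (hn1 : 1 ≤ n) :
    ∀ x y : ℝ, 0 < x → x ≤ y → φ' y * x ^ n ≤ φ' x * y ^ n := by
  have hder : ∀ t ∈ Set.Ioi (0:ℝ), HasDerivAt (fun t => φ' t / t ^ n)
      ((φ'' t * t ^ n - φ' t * (n * t ^ (n-1))) / (t ^ n) ^ 2) t := by
    intro t ht
    have ht' : (0:ℝ) < t := ht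
    exact (hφ'der t ht').div (hasDerivAt_pow n t) (by positivity)
  have hanti : AntitoneOn (fun t => φ' t / t ^ n) (Set.Ioi 0) := by
    apply antitoneOn_of_deriv_nonpos (convex_Ioi 0)
    · intro t ht
      exact ((hder t ht).continuousAt.continuousWithinAt)
    · intro t ht
      rw [interior_Ioi] at ht
      exact (hder t ht).differentiableAt.differentiableWithinAt
    · intro t ht
      rw [interior_Ioi] at ht
      rw [(hder t ht).deriv]
      have ht' : (0:ℝ) < t := ht
      apply div_nonpos_of_nonpos_of_nonneg _ (by positivity)
      have h1 : c₁ * (t * φ'' t) ≤ φ' t := hub t ht'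
      have hφ'nn : 0 < φ' t := hφ'pos t ht'
      have h2 : φ'' t * t ≤ (n:ℝ) * φ' t := by
        have ha : φ'' t * t ≤ φ' t / c₁ := by rw [le_div_iff₀ hc₁]; nlinarith
        have hb : φ' t / c₁ ≤ (n:ℝ) * φ' t := by
          rw [div_le_iff₀ hc₁]
          have : 1 / c₁ * c₁ ≤ (n:ℝ) * c₁ := mul_le_mul_of_nonneg_right hn hc₁.le
          rw [one_div, inv_mul_cancel₀ hc₁.ne'] at this
          nlinarith
        linarith
      have htp : t ^ n = t ^ (n-1) * t := by
        rw [← pow_succ]; congr 1; omega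
      have htnn : (0:ℝ) ≤ t ^ (n-1) := by positivity
      rw [htp]
      nlinarith [mul_le_mul_of_nonneg_right h2 htnn]
  intro x y hx hxy
  have hy : (0:ℝ) < y := lt_of_lt_of_le hx hxy
  have := hanti (Set.mem_Ioi.2 hx) (Set.mem_Ioi.2 hy) hxy
  simp only at this
  rw [div_le_div_iff₀ (by positivity) (by positivity)] at this
  linarith

private lemma comp_lemma (φ' φ'' : ℝ → ℝ) (c₁ c₂ : ℝ) (hc₁ : 0 < c₁) (hc₂ : 0 < c₂)
    (hφ'mono : MonotoneOn φ' (Set.Ici 0))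
    (hφ'pos : ∀ t : ℝ, 0 < t → 0 < φ' t)
    (hequiv : ∀ t : ℝ, 0 < t → c₁ * (t * φ'' t) ≤ φ' t ∧ φ' t ≤ c₂ * (t * φ'' t))
    (n : ℕ) (hdbl : ∀ x y : ℝ, 0 < x → x ≤ y → φ' y * x ^ n ≤ φ' x * y ^ n)
    (K x y : ℝ) (hK : 1 ≤ K) (hx : 0 < x) (hxy : x ≤ y) (hyK : y ≤ K * x) :
    c₁ / (c₂ * K) * φ'' x ≤ φ'' y ∧ φ'' y ≤ K ^ n * c₂ / c₁ * φ'' x := by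
  have hy : 0 < y := lt_of_lt_of_le hx hxy
  have h1y := (hequiv y hy).1
  have h2y := (hequiv y hy).2
  have h1x := (hequiv x hx).1
  have h2x := (hequiv x hx).2
  have hφ'x := hφ'pos x hx
  have hφ'y := hφ'pos y hy
  have hK0 : (0:ℝ) < K := lt_of_lt_of_le one_pos hK
  have hφ''x : 0 < φ'' x := by nlinarith [mul_pos hc₂ hx]
  have hφ''y : 0 < φ'' y := by nlinarith [mul_pos hc₂ hy]
  constructor
  · rw [show c₁ / (c₂ * K) * φ'' x = c₁ * φ'' x / (c₂ * K) by ring,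
      div_le_iff₀ (by positivity)]
    have hmono := hφ'mono (Set.mem_Ici.2 hx.le) (Set.mem_Ici.2 hy.le) hxy
    -- c₁ x φ'' x ≤ φ' x ≤ φ' y ≤ c₂ y φ'' y ≤ c₂ K x φ'' y
    have e1 : c₁ * (x * φ'' x) ≤ c₂ * (y * φ'' y) := by linarith
    have e2 : c₂ * (y * φ'' y) ≤ c₂ * (K * x * φ'' y) := by nlinarith
    have e3 : c₁ * (x * φ'' x) ≤ c₂ * (K * x * φ'' y) := le_trans e1 e2
    nlinarith
  · have e1 : φ' y * x ^ n ≤ φ' x * y ^ n := hdbl x y hx hxy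
    have e2 : y ^ n ≤ K ^ n * x ^ n := by
      rw [← mul_pow]; exact pow_le_pow_left₀ hy.le hyK n
    have e3 : φ' x * y ^ n ≤ φ' x * (K ^ n * x ^ n) :=
      mul_le_mul_of_nonneg_left e2 hφ'x.le
    have hxn : (0:ℝ) < x ^ n := by positivity
    have e4 : c₁ * (y * φ'' y) * x ^ n ≤ c₂ * (x * φ'' x) * K ^ n * x ^ n := by
      have a1 : c₁ * (y * φ'' y) * x ^ n ≤ φ' y * x ^ n :=
        mul_le_mul_of_nonneg_right h1y hxn.le
      have a2 : φ' x * (K ^ n * x ^ n) ≤ c₂ * (x * φ'' x) * (K ^ n * x ^ n) := by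
        apply mul_le_mul_of_nonneg_right h2x (by positivity)
      calc c₁ * (y * φ'' y) * x ^ n ≤ φ' y * x ^ n := a1
        _ ≤ φ' x * y ^ n := e1
        _ ≤ φ' x * (K ^ n * x ^ n) := e3
        _ ≤ c₂ * (x * φ'' x) * (K ^ n * x ^ n) := a2
        _ = c₂ * (x * φ'' x) * K ^ n * x ^ n := by ring
    have e5 : c₁ * (y * φ'' y) ≤ c₂ * (x * φ'' x) * K ^ n :=
      le_of_mul_le_mul_right e4 hxn
    rw [show K ^ n * c₂ / c₁ * φ'' x = K ^ n * c₂ * φ'' x / c₁ by ring,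
      le_div_iff₀ hc₁]
    -- φ'' y * c₁ ≤ K^n c₂ φ'' x ; from e5 : c₁ y φ'' y ≤ c₂ x φ'' x K^n  and x ≤ y
    have e6 : c₂ * (x * φ'' x) * K ^ n ≤ c₂ * (y * φ'' x) * K ^ n := by
      have hpos : (0:ℝ) ≤ c₂ * φ'' x * K ^ n := by positivity
      nlinarith [mul_le_mul_of_nonneg_right hxy hpos]
    have e7 : c₁ * (y * φ'' y) ≤ c₂ * (y * φ'' x) * K ^ n := le_trans e5 e6
    nlinarith


private lemma ftc_right (φ' φ'' : ℝ → ℝ)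
    (hφ'cont : ContinuousOn φ' (Set.Ici 0))
    (hφ'der : ∀ t : ℝ, 0 < t → HasDerivAt φ' (φ'' t) t)
    (hφ''nn : ∀ t : ℝ, 0 < t → 0 ≤ φ'' t)
    (A β p q : ℝ) (hA : 0 ≤ A) (hβ : 0 < β) (hpq : p ≤ q) :
    IntegrableOn (fun r => φ'' (A + (r - p) * β)) (Set.Ioc p q) ∧
      ∫ r in p..q, φ'' (A + (r - p) * β) = (φ' (A + (q - p) * β) - φ' A) / β := by
  set w : ℝ → ℝ := fun r => A + (r - p) * β with hw
  have hwc : Continuous w := by fun_prop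
  have hwmem : ∀ r ∈ Set.Icc p q, w r ∈ Set.Ici (0:ℝ) := by
    intro r hr
    have : 0 ≤ (r - p) * β := mul_nonneg (by linarith [hr.1]) hβ.le
    simp only [hw, Set.mem_Ici]; linarith
  have hgc : ContinuousOn (fun r => φ' (w r) / β) (Set.Icc p q) :=
    (hφ'cont.comp hwc.continuousOn hwmem).div_const β
  have hder : ∀ r ∈ Set.Ioo p q, HasDerivAt (fun r => φ' (w r) / β) (φ'' (w r)) r := by
    intro r hr
    have hwr : 0 < w r := by
      have : 0 < (r - p) * β := mul_pos (by linarith [hr.1]) hβ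
      simp only [hw]; linarith
    have h1 : HasDerivAt w β r := by
      have h0 : HasDerivAt (fun r : ℝ => A + (r - p) * β) (1 * β) r :=
        (((hasDerivAt_id r).sub_const p).mul_const β).const_add A
      rw [one_mul] at h0; exact h0
    have h2 := ((hφ'der (w r) hwr).comp r h1).div_const β
    simpa [mul_div_assoc, div_self hβ.ne'] using h2
  have hint : IntegrableOn (fun r => φ'' (w r)) (Set.Ioc p q) :=
    intervalIntegral.integrableOn_deriv_of_nonneg hgc hder
      (fun r hr => hφ''nn _ (by
        have : 0 < (r - p) * β := mul_pos (by linarith [hr.1]) hβ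
        simp only [hw]; linarith))
  refine ⟨hint, ?_⟩
  have hii : IntervalIntegrable (fun r => φ'' (w r)) volume p q :=
    (intervalIntegrable_iff_integrableOn_Ioc_of_le hpq).2 hint
  have heq := intervalIntegral.integral_eq_sub_of_hasDeriv_right_of_le hpq hgc
      (fun r hr => (hder r hr).hasDerivWithinAt) hii
  rw [heq]
  simp only [hw, sub_self, zero_mul, add_zero]
  ring

private lemma ftc_left (φ' φ'' : ℝ → ℝ)
    (hφ'cont : ContinuousOn φ' (Set.Ici 0))
    (hφ'der : ∀ t : ℝ, 0 < t → HasDerivAt φ' (φ'' t) t)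
    (hφ''nn : ∀ t : ℝ, 0 < t → 0 ≤ φ'' t)
    (A β p q : ℝ) (hA : 0 ≤ A) (hβ : 0 < β) (hpq : p ≤ q) :
    IntegrableOn (fun r => φ'' (A + (q - r) * β)) (Set.Ioc p q) ∧
      ∫ r in p..q, φ'' (A + (q - r) * β) = (φ' (A + (q - p) * β) - φ' A) / β := by
  set w : ℝ → ℝ := fun r => A + (q - r) * β with hw
  have hwc : Continuous w := by fun_prop
  have hwmem : ∀ r ∈ Set.Icc p q, w r ∈ Set.Ici (0:ℝ) := by
    intro r hr
    have : 0 ≤ (q - r) * β := mul_nonneg (by linarith [hr.2]) hβ.le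
    simp only [hw, Set.mem_Ici]; linarith
  have hgc : ContinuousOn (fun r => -(φ' (w r)) / β) (Set.Icc p q) :=
    ((hφ'cont.comp hwc.continuousOn hwmem).neg).div_const β
  have hder : ∀ r ∈ Set.Ioo p q, HasDerivAt (fun r => -(φ' (w r)) / β) (φ'' (w r)) r := by
    intro r hr
    have hwr : 0 < w r := by
      have : 0 < (q - r) * β := mul_pos (by linarith [hr.2]) hβ
      simp only [hw]; linarith
    have h1 : HasDerivAt w (-β) r := by
      have h0 : HasDerivAt (fun r : ℝ => A + (q - r) * β) (-1 * β) r :=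
        (((hasDerivAt_id r).neg.const_add q).mul_const β).const_add A
      rw [neg_one_mul] at h0; exact h0
    have h2 := (((hφ'der (w r) hwr).comp r h1).neg).div_const β
    have : -(φ'' (w r) * -β) / β = φ'' (w r) := by field_simp
    rwa [this] at h2
  have hint : IntegrableOn (fun r => φ'' (w r)) (Set.Ioc p q) :=
    intervalIntegral.integrableOn_deriv_of_nonneg hgc hder
      (fun r hr => hφ''nn _ (by
        have : 0 < (q - r) * β := mul_pos (by linarith [hr.2]) hβ
        simp only [hw]; linarith))
  refine ⟨hint, ?_⟩
  have hii : IntervalIntegrable (fun r => φ'' (w r)) volume p q :=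
    (intervalIntegrable_iff_integrableOn_Ioc_of_le hpq).2 hint
  have heq := intervalIntegral.integral_eq_sub_of_hasDeriv_right_of_le hpq hgc
      (fun r hr => (hder r hr).hasDerivWithinAt) hii
  rw [heq]
  simp only [hw, sub_self, zero_mul, add_zero]
  ring


set_option maxHeartbeats 1000000 in
private lemma oneD (φ φ' φ'' : ℝ → ℝ) (hA : SatisfiesAssumption φ φ' φ'')
    (c₁ c₂ : ℝ) (hc₁ : 0 < c₁) (hc₂ : 0 < c₂)
    (hequiv : ∀ t : ℝ, 0 < t → c₁ * (t * φ'' t) ≤ φ' t ∧ φ' t ≤ c₂ * (t * φ'' t)) :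
    ∃ C₃ C₄ : ℝ, 0 < C₃ ∧ 0 < C₄ ∧
      ∀ (m : ℕ) (z₁ z₂ : EuclideanSpace ℝ (Fin m)) (μ θ : ℝ),
        0 ≤ μ → 0 < μ + ‖z₁‖ + ‖z₂‖ → 1/2 ≤ θ → θ ≤ 1 →
        IntegrableOn (fun r => φ'' (μ + ‖z₁ + r • z₂‖)) (Set.Ioc 0 θ) ∧
        C₃ * φ'' (μ + ‖z₁‖ + ‖z₂‖) ≤ (∫ r in Set.Ioc (0:ℝ) θ, φ'' (μ + ‖z₁ + r • z₂‖)) ∧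
        (∫ r in Set.Ioc (0:ℝ) θ, φ'' (μ + ‖z₁ + r • z₂‖)) ≤ C₄ * φ'' (μ + ‖z₁‖ + ‖z₂‖) := by
  obtain ⟨⟨hconv, hφ0, hφ'0, hrep, hφ'cw, hφ'mono, hφ'pos, hφ'top⟩, hφder, hφ'cont, hφ'der, hφ''cont⟩ := hA
  have hφ'nonneg : ∀ t : ℝ, 0 ≤ t → 0 ≤ φ' t := by
    intro t ht
    rcases eq_or_lt_of_le ht with hh | hh
    · rw [← hh, hφ'0]
    · exact (hφ'pos t hh).le
  have hφ''pos : ∀ t : ℝ, 0 < t → 0 < φ'' t := by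
    intro t ht
    have h2 := (hequiv t ht).2
    have := hφ'pos t ht
    nlinarith [mul_pos hc₂ ht]
  have hφ''nn : ∀ t : ℝ, 0 < t → 0 ≤ φ'' t := fun t ht => (hφ''pos t ht).le
  set n : ℕ := max 1 (Nat.ceil (1/c₁)) with hn_def
  have hn : 1/c₁ ≤ (n : ℝ) := le_trans (Nat.le_ceil _)
    (Nat.cast_le.2 (le_max_right _ _))
  have hn1 : 1 ≤ n := le_max_left _ _
  clear_value n
  have hdbl := phi_doubling φ' φ'' c₁ hc₁ hφ'der hφ'pos (fun t ht => (hequiv t ht).1) n hn hn1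
  have hcomp := comp_lemma φ' φ'' c₁ c₂ hc₁ hc₂ hφ'mono hφ'pos hequiv n hdbl
  have sqrt_aux : ∀ x y : ℝ, 0 ≤ x → 0 ≤ y → x^2 ≤ y^2 → x ≤ y := by
    intro x y hx hy hh; nlinarith
  refine ⟨c₁ / (8 * 24^n * c₂), 3*c₂/c₁ + 12*2^n*c₂^2/c₁, by positivity, by positivity, ?_⟩
  intro m z₁ z₂ μ θ hμ hP hθh hθ1
  have hθ0 : (0:ℝ) < θ := by linarith
  have hb0 : 0 ≤ ‖z₂‖ := norm_nonneg _
  have hz₁0 : 0 ≤ ‖z₁‖ := norm_nonneg _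
  have hPpos : 0 < φ'' (μ + ‖z₁‖ + ‖z₂‖) := hφ''pos _ hP
  have hcont_h : Continuous (fun r : ℝ => μ + ‖z₁ + r • z₂‖) := by fun_prop
  have hh_leP : ∀ r : ℝ, 0 ≤ r → r ≤ 1 → μ + ‖z₁ + r • z₂‖ ≤ μ + ‖z₁‖ + ‖z₂‖ := by
    intro r hr0 hr1
    have h1 : ‖z₁ + r • z₂‖ ≤ ‖z₁‖ + ‖r • z₂‖ := norm_add_le _ _
    have h2 : ‖r • z₂‖ = r * ‖z₂‖ := by
      rw [norm_smul, Real.norm_eq_abs, abs_of_nonneg hr0]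
    nlinarith
  have hh_ge : ∀ r : ℝ, 0 ≤ r → |r * ‖z₂‖ - ‖z₁‖| ≤ ‖z₁ + r • z₂‖ := by
    intro r hr0
    have h2 : ‖r • z₂‖ = r * ‖z₂‖ := by
      rw [norm_smul, Real.norm_eq_abs, abs_of_nonneg hr0]
    rw [abs_le]
    constructor
    · have := norm_sub_norm_le z₁ (z₁ + r • z₂)
      simp only [sub_add_cancel_left, norm_neg] at this
      rw [h2] at this
      linarith
    · have := norm_sub_norm_le (r • z₂) (z₁ + r • z₂)
      have heq : r • z₂ - (z₁ + r • z₂) = -z₁ := by abel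
      rw [heq, norm_neg, h2] at this
      linarith
  by_cases hcase : ‖z₂‖ ≤ (μ + ‖z₁‖)/2
  · -- Case 1 : ‖z₂‖ small compared to μ + ‖z₁‖
    have ha : 0 < μ + ‖z₁‖ := by linarith
    have hptw : ∀ r ∈ Set.Icc (0:ℝ) θ,
        0 < μ + ‖z₁ + r • z₂‖ ∧ μ + ‖z₁ + r • z₂‖ ≤ μ + ‖z₁‖ + ‖z₂‖ ∧
          μ + ‖z₁‖ + ‖z₂‖ ≤ 3 * (μ + ‖z₁ + r • z₂‖) := by
      intro r hr
      have hr0 := hr.1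
      have hr1 : r ≤ 1 := le_trans hr.2 hθ1
      have hge := hh_ge r hr0
      have hgel : ‖z₁‖ - r * ‖z₂‖ ≤ ‖z₁ + r • z₂‖ := by
        calc ‖z₁‖ - r * ‖z₂‖ ≤ |‖z₁‖ - r * ‖z₂‖| := le_abs_self _
          _ = |r * ‖z₂‖ - ‖z₁‖| := abs_sub_comm _ _
          _ ≤ ‖z₁ + r • z₂‖ := hge
      have hrb : r * ‖z₂‖ ≤ ‖z₂‖ := by nlinarith
      have hhge : (μ + ‖z₁‖)/2 ≤ μ + ‖z₁ + r • z₂‖ := by nlinarith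
      exact ⟨by linarith, hh_leP r hr0 hr1, by linarith⟩
    have hfcont : ContinuousOn (fun r => φ'' (μ + ‖z₁ + r • z₂‖)) (Set.Icc 0 θ) := by
      apply hφ''cont.comp hcont_h.continuousOn
      intro r hr
      exact (hptw r hr).1
    have hfint : IntegrableOn (fun r => φ'' (μ + ‖z₁ + r • z₂‖)) (Set.Ioc 0 θ) :=
      (hfcont.integrableOn_Icc).mono_set Set.Ioc_subset_Icc_self
    refine ⟨hfint, ?_, ?_⟩
    · -- lower bound
      have hptw' : ∀ r ∈ Set.Ioc (0:ℝ) θ,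
          c₁/(3^n * c₂) * φ'' (μ + ‖z₁‖ + ‖z₂‖) ≤ φ'' (μ + ‖z₁ + r • z₂‖) := by
        intro r hr
        obtain ⟨h0, h1, h3⟩ := hptw r (Set.Ioc_subset_Icc_self hr)
        have hcmp := (hcomp 3 (μ + ‖z₁ + r • z₂‖) (μ + ‖z₁‖ + ‖z₂‖) (by norm_num) h0 h1 (by linarith)).2
        rw [div_mul_eq_mul_div, div_le_iff₀ (by positivity)]
        have hmul := mul_le_mul_of_nonneg_left hcmp hc₁.le
        have heq : c₁ * (3^n * c₂ / c₁ * φ'' (μ + ‖z₁ + r • z₂‖))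
            = φ'' (μ + ‖z₁ + r • z₂‖) * (3^n * c₂) := by field_simp
        linarith
      have h1 : ∫ r in Set.Ioc (0:ℝ) θ, (c₁/(3^n * c₂) * φ'' (μ + ‖z₁‖ + ‖z₂‖))
          ≤ ∫ r in Set.Ioc (0:ℝ) θ, φ'' (μ + ‖z₁ + r • z₂‖) := by
        apply setIntegral_mono_on _ hfint measurableSet_Ioc hptw'
        exact integrableOn_const (by rw [Real.volume_Ioc]; exact ENNReal.ofReal_ne_top)
      rw [setIntegral_const, measureReal_def, Real.volume_Ioc, ENNReal.toReal_ofReal (by linarith), smul_eq_mul] at h1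
      have hconst : c₁ / (8 * 24^n * c₂) ≤ (θ - 0) * (c₁/(3^n * c₂)) := by
        have h3n : (0:ℝ) < 3^n := by positivity
        have h24 : (3:ℝ)^n ≤ 24^n := pow_le_pow_left₀ (by norm_num) (by norm_num) n
        have e1 : c₁ / (8 * 24^n * c₂) ≤ c₁ / (2 * 3^n * c₂) := by
          apply div_le_div_of_nonneg_left hc₁.le (by positivity)
          nlinarith [pow_pos (show (0:ℝ) < 24 by norm_num) n]
        have e2 : c₁ / (2 * 3^n * c₂) = (1/2) * (c₁/(3^n * c₂)) := by
          ring
        have e3 : (1/2) * (c₁/(3^n * c₂)) ≤ (θ - 0) * (c₁/(3^n * c₂)) := by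
          apply mul_le_mul_of_nonneg_right (by linarith) (by positivity)
        linarith
      calc c₁ / (8 * 24^n * c₂) * φ'' (μ + ‖z₁‖ + ‖z₂‖)
          ≤ (θ - 0) * (c₁/(3^n * c₂)) * φ'' (μ + ‖z₁‖ + ‖z₂‖) :=
            mul_le_mul_of_nonneg_right hconst hPpos.le
        _ = (θ - 0) * (c₁/(3^n * c₂) * φ'' (μ + ‖z₁‖ + ‖z₂‖)) := by ring
        _ ≤ _ := h1
    · -- upper bound
      have hptw' : ∀ r ∈ Set.Ioc (0:ℝ) θ,
          φ'' (μ + ‖z₁ + r • z₂‖) ≤ 3 * c₂/c₁ * φ'' (μ + ‖z₁‖ + ‖z₂‖) := by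
        intro r hr
        obtain ⟨h0, h1, h3⟩ := hptw r (Set.Ioc_subset_Icc_self hr)
        have hlow := (hcomp 3 (μ + ‖z₁ + r • z₂‖) (μ + ‖z₁‖ + ‖z₂‖) (by norm_num) h0 h1 (by linarith)).1
        rw [div_mul_eq_mul_div, div_le_iff₀ (by positivity)] at hlow
        rw [show 3 * c₂/c₁ * φ'' (μ + ‖z₁‖ + ‖z₂‖) = 3 * c₂ * φ'' (μ + ‖z₁‖ + ‖z₂‖) / c₁ by ring,
          le_div_iff₀ hc₁]
        nlinarith
      have h1 : ∫ r in Set.Ioc (0:ℝ) θ, φ'' (μ + ‖z₁ + r • z₂‖)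
          ≤ ∫ r in Set.Ioc (0:ℝ) θ, (3 * c₂/c₁ * φ'' (μ + ‖z₁‖ + ‖z₂‖)) := by
        apply setIntegral_mono_on hfint _ measurableSet_Ioc hptw'
        exact integrableOn_const (by rw [Real.volume_Ioc]; exact ENNReal.ofReal_ne_top)
      rw [setIntegral_const, measureReal_def, Real.volume_Ioc, ENNReal.toReal_ofReal (by linarith), smul_eq_mul] at h1
      have h2 : (θ - 0) * (3 * c₂/c₁ * φ'' (μ + ‖z₁‖ + ‖z₂‖))
          ≤ 3 * c₂/c₁ * φ'' (μ + ‖z₁‖ + ‖z₂‖) := by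
        have hpos : 0 ≤ 3 * c₂/c₁ * φ'' (μ + ‖z₁‖ + ‖z₂‖) := by positivity
        have := mul_le_mul_of_nonneg_right (show θ - 0 ≤ 1 by linarith) hpos
        linarith
      have h3 : 3 * c₂/c₁ * φ'' (μ + ‖z₁‖ + ‖z₂‖)
          ≤ (3*c₂/c₁ + 12*2^n*c₂^2/c₁) * φ'' (μ + ‖z₁‖ + ‖z₂‖) := by
        apply mul_le_mul_of_nonneg_right _ hPpos.le
        have : (0:ℝ) ≤ 12*2^n*c₂^2/c₁ := by positivity
        linarith
      linarith
  · -- Case 2 : ‖z₂‖ large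
    push_neg at hcase
    have hb : 0 < ‖z₂‖ := by
      have : 0 ≤ (μ + ‖z₁‖)/2 := by linarith
      linarith
    have hz₂ : z₂ ≠ 0 := norm_pos_iff.mp hb
    obtain ⟨rs, hrs_def⟩ : ∃ x : ℝ, x = -(inner ℝ z₁ z₂)/‖z₂‖^2 := ⟨_, rfl⟩
    obtain ⟨d, hd_def⟩ : ∃ x : ℝ, x = ‖z₁ + rs • z₂‖ := ⟨_, rfl⟩
    have hd0 : 0 ≤ d := hd_def ▸ norm_nonneg _
    have hkey : ∀ r : ℝ, ‖z₁ + r • z₂‖^2 = d^2 + (r - rs)^2 * ‖z₂‖^2 := by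
      intro r
      have hsplit : z₁ + r • z₂ = (z₁ + rs • z₂) + (r - rs) • z₂ := by
        rw [sub_smul]; abel
      have hinner : (inner ℝ (z₁ + rs • z₂) ((r - rs) • z₂)) = 0 := by
        rw [real_inner_smul_right, inner_add_left, real_inner_smul_left,
          real_inner_self_eq_norm_sq]
        have hrs : rs * ‖z₂‖^2 = -(inner ℝ z₁ z₂) := by
          rw [hrs_def]; field_simp
        rw [hrs]
        ring
      calc ‖z₁ + r • z₂‖^2 = ‖(z₁ + rs • z₂) + (r - rs) • z₂‖^2 := by rw [← hsplit]
        _ = ‖z₁ + rs • z₂‖^2 + 2*(inner ℝ (z₁ + rs • z₂) ((r - rs) • z₂))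
            + ‖(r - rs) • z₂‖^2 := norm_add_sq_real _ _
        _ = d^2 + (r - rs)^2 * ‖z₂‖^2 := by
            rw [hinner, hd_def, norm_smul, Real.norm_eq_abs, mul_pow, sq_abs]; ring
    have hd_le : ∀ r : ℝ, d ≤ ‖z₁ + r • z₂‖ := by
      intro r
      apply sqrt_aux _ _ hd0 (norm_nonneg _)
      nlinarith [hkey r, mul_nonneg (sq_nonneg (r - rs)) (sq_nonneg ‖z₂‖)]
    have habs_le : ∀ r : ℝ, |r - rs| * ‖z₂‖ ≤ ‖z₁ + r • z₂‖ := by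
      intro r
      apply sqrt_aux _ _ (by positivity) (norm_nonneg _)
      have heq : (|r - rs| * ‖z₂‖)^2 = (r - rs)^2 * ‖z₂‖^2 := by rw [mul_pow, sq_abs]
      nlinarith [hkey r, sq_nonneg d]
    have hub' : ∀ r : ℝ, ‖z₁ + r • z₂‖ ≤ d + |r - rs| * ‖z₂‖ := by
      intro r
      apply sqrt_aux _ _ (norm_nonneg _) (by positivity)
      have heq : (|r - rs| * ‖z₂‖)^2 = (r - rs)^2 * ‖z₂‖^2 := by rw [mul_pow, sq_abs]
      nlinarith [hkey r, mul_nonneg (mul_nonneg hd0 (abs_nonneg (r - rs))) hb0]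
    have hkey0 : ‖z₁‖^2 = d^2 + rs^2 * ‖z₂‖^2 := by
      have := hkey 0
      simpa [zero_sub, neg_sq] using this
    have hd_z₁ : d ≤ ‖z₁‖ := by
      apply sqrt_aux _ _ hd0 hz₁0
      nlinarith [mul_nonneg (sq_nonneg rs) (sq_nonneg ‖z₂‖)]
    have hrs_b : |rs| * ‖z₂‖ ≤ ‖z₁‖ := by
      apply sqrt_aux _ _ (by positivity) hz₁0
      have heq : (|rs| * ‖z₂‖)^2 = rs^2 * ‖z₂‖^2 := by rw [mul_pow, sq_abs]
      nlinarith [sq_nonneg d]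
    have hL_low : ∀ r : ℝ, (μ + d)/2 + |r - rs| * (‖z₂‖/2) ≤ μ + ‖z₁ + r • z₂‖ := by
      intro r
      have h1 := hd_le r
      have h2 := habs_le r
      linarith
    have hL_up : ∀ r : ℝ, μ + ‖z₁ + r • z₂‖ ≤ 2 * ((μ + d)/2 + |r - rs| * (‖z₂‖/2)) := by
      intro r
      have := hub' r
      linarith
    have hβ : 0 < ‖z₂‖/2 := by linarith
    have hA2 : 0 ≤ (μ + d)/2 := by linarith
    have habs_rs : 0 ≤ |rs| := abs_nonneg rs
    have hrs_le : rs ≤ |rs| := le_abs_self rs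
    have hrs_ge : -|rs| ≤ rs := neg_abs_le rs
    have hle1 : rs - (|rs|+1) ≤ rs := by linarith
    have hle2 : rs ≤ rs + (|rs|+1) := by linarith
    have ftcR := ftc_right φ' φ'' hφ'cont hφ'der hφ''nn ((μ + d)/2) (‖z₂‖/2) rs (rs + (|rs|+1)) hA2 hβ hle2
    have ftcL := ftc_left φ' φ'' hφ'cont hφ'der hφ''nn ((μ + d)/2) (‖z₂‖/2) (rs - (|rs|+1)) rs hA2 hβ hle1
    have hGR : IntegrableOn (fun r => φ'' ((μ + d)/2 + |r - rs| * (‖z₂‖/2)))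
        (Set.Ioc rs (rs + (|rs|+1))) := by
      apply ftcR.1.congr_fun _ measurableSet_Ioc
      intro r hr
      simp only
      rw [abs_of_nonneg (by linarith [hr.1] : (0:ℝ) ≤ r - rs)]
    have hGL : IntegrableOn (fun r => φ'' ((μ + d)/2 + |r - rs| * (‖z₂‖/2)))
        (Set.Ioc (rs - (|rs|+1)) rs) := by
      apply ftcL.1.congr_fun _ measurableSet_Ioc
      intro r hr
      simp only
      rw [abs_of_nonpos (by linarith [hr.2] : r - rs ≤ 0)]
      ring_nf
    have hsub_big : Set.Ioc (0:ℝ) θ ⊆ Set.Ioc (rs - (|rs|+1)) (rs + (|rs|+1)) :=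
      Set.Ioc_subset_Ioc (by linarith) (by linarith)
    have hGbig : IntegrableOn (fun r => φ'' ((μ + d)/2 + |r - rs| * (‖z₂‖/2)))
        (Set.Ioc (rs - (|rs|+1)) (rs + (|rs|+1))) := by
      rw [← Set.Ioc_union_Ioc_eq_Ioc hle1 hle2]
      exact hGL.union hGR
    have hGsmall : IntegrableOn (fun r => φ'' ((μ + d)/2 + |r - rs| * (‖z₂‖/2)))
        (Set.Ioc 0 θ) := hGbig.mono_set hsub_big
    have hG_ae_nonneg : ∀ᵐ r : ℝ, 0 ≤ φ'' ((μ + d)/2 + |r - rs| * (‖z₂‖/2)) := by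
      rw [ae_iff]
      refine measure_mono_null (t := {rs}) ?_ (measure_singleton rs)
      intro r hr
      simp only [Set.mem_setOf_eq, not_le] at hr
      simp only [Set.mem_singleton_iff]
      by_contra hrrs
      have habs : 0 < |r - rs| := abs_pos.2 (sub_ne_zero.2 hrrs)
      have : 0 < (μ + d)/2 + |r - rs| * (‖z₂‖/2) := by nlinarith
      exact absurd (hφ''nn _ this) (not_le.2 hr)
    have hSsub : {r : ℝ | ¬ 0 < μ + ‖z₁ + r • z₂‖}.Subsingleton := by
      intro r₁ hr₁ r₂ hr₂
      simp only [Set.mem_setOf_eq, not_lt] at hr₁ hr₂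
      have e₁ : z₁ + r₁ • z₂ = 0 := by
        have := norm_nonneg (z₁ + r₁ • z₂)
        exact norm_eq_zero.1 (le_antisymm (by linarith) this)
      have e₂ : z₁ + r₂ • z₂ = 0 := by
        have := norm_nonneg (z₁ + r₂ • z₂)
        exact norm_eq_zero.1 (le_antisymm (by linarith) this)
      have hsm : (r₁ - r₂) • z₂ = 0 := by
        calc (r₁ - r₂) • z₂ = (z₁ + r₁ • z₂) - (z₁ + r₂ • z₂) := by rw [sub_smul]; abel
          _ = 0 := by rw [e₁, e₂, sub_self]
      rcases smul_eq_zero.1 hsm with hh | hh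
      · exact sub_eq_zero.1 hh
      · exact absurd hh hz₂
    have hnull : volume {r : ℝ | ¬ 0 < μ + ‖z₁ + r • z₂‖} = 0 := hSsub.measure_zero volume
    have hae_pos : ∀ᵐ r : ℝ, 0 < μ + ‖z₁ + r • z₂‖ := by rw [ae_iff]; exact hnull
    have hSopen : IsOpen {r : ℝ | 0 < μ + ‖z₁ + r • z₂‖} := isOpen_lt continuous_const hcont_h
    have hfmeas : AEStronglyMeasurable (fun r => φ'' (μ + ‖z₁ + r • z₂‖))
        (volume.restrict (Set.Ioc 0 θ)) := by
      have hcf : ContinuousOn (fun r => φ'' (μ + ‖z₁ + r • z₂‖)) {r : ℝ | 0 < μ + ‖z₁ + r • z₂‖} :=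
        hφ''cont.comp hcont_h.continuousOn (fun r hr => hr)
      have h1 : AEStronglyMeasurable (fun r => φ'' (μ + ‖z₁ + r • z₂‖))
          (volume.restrict (Set.Ioc 0 θ ∩ {r : ℝ | 0 < μ + ‖z₁ + r • z₂‖})) :=
        (hcf.mono Set.inter_subset_right).aestronglyMeasurable
          (measurableSet_Ioc.inter hSopen.measurableSet)
      rwa [Measure.restrict_congr_set ?_] at h1
      rw [MeasureTheory.ae_eq_set]
      constructor
      · rw [Set.diff_eq_empty.2 Set.inter_subset_left]
        exact measure_empty
      · apply measure_mono_null _ hnull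
        intro r hr
        exact fun hpos => hr.2 ⟨hr.1, hpos⟩
    have hdom : ∀ᵐ r ∂(volume.restrict (Set.Ioc (0:ℝ) θ)),
        ‖φ'' (μ + ‖z₁ + r • z₂‖)‖ ≤ (2^n * c₂ / c₁) * φ'' ((μ + d)/2 + |r - rs| * (‖z₂‖/2)) := by
      apply ae_restrict_of_ae
      filter_upwards [hae_pos] with r hr
      have hx : 0 < (μ + d)/2 + |r - rs| * (‖z₂‖/2) := by linarith [hL_up r]
      have hcmp := (hcomp 2 ((μ + d)/2 + |r - rs| * (‖z₂‖/2)) (μ + ‖z₁ + r • z₂‖)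
        (by norm_num) hx (hL_low r) (hL_up r)).2
      rw [Real.norm_eq_abs, abs_of_pos (hφ''pos _ hr)]
      exact hcmp
    have hfint : IntegrableOn (fun r => φ'' (μ + ‖z₁ + r • z₂‖)) (Set.Ioc 0 θ) :=
      Integrable.mono' (hGsmall.const_mul (2^n * c₂ / c₁)) hfmeas hdom
    refine ⟨hfint, ?_, ?_⟩
    · -- lower bound
      obtain ⟨p, q, hpq_len, hp0, hq_le, hlow8⟩ :
          ∃ p q : ℝ, q - p = 1/8 ∧ 0 ≤ p ∧ q ≤ θ ∧
            ∀ r ∈ Set.Ioc p q, ‖z₂‖/8 ≤ ‖z₁ + r • z₂‖ := by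
        by_cases hρ : ‖z₂‖/4 ≤ ‖z₁‖
        · refine ⟨0, 1/8, by norm_num, le_refl 0, by linarith, ?_⟩
          intro r hr
          have h1 := hh_ge r hr.1.le
          have h2 : r * ‖z₂‖ ≤ 1/8 * ‖z₂‖ := mul_le_mul_of_nonneg_right hr.2 hb0
          have h3 : ‖z₂‖/8 ≤ ‖z₁‖ - r * ‖z₂‖ := by linarith
          calc ‖z₂‖/8 ≤ ‖z₁‖ - r * ‖z₂‖ := h3
            _ ≤ |‖z₁‖ - r * ‖z₂‖| := le_abs_self _
            _ = |r * ‖z₂‖ - ‖z₁‖| := abs_sub_comm _ _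
            _ ≤ ‖z₁ + r • z₂‖ := h1
        · push_neg at hρ
          refine ⟨3/8, 1/2, by norm_num, by norm_num, hθh, ?_⟩
          intro r hr
          have hr0 : (0:ℝ) ≤ r := by linarith [hr.1]
          have h1 := hh_ge r hr0
          have h2 : 3/8 * ‖z₂‖ ≤ r * ‖z₂‖ := mul_le_mul_of_nonneg_right hr.1.le hb0
          have h3 : ‖z₂‖/8 ≤ r * ‖z₂‖ - ‖z₁‖ := by linarith
          calc ‖z₂‖/8 ≤ r * ‖z₂‖ - ‖z₁‖ := h3
            _ ≤ |r * ‖z₂‖ - ‖z₁‖| := le_abs_self _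
            _ ≤ ‖z₁ + r • z₂‖ := h1
      have hq1 : q ≤ 1 := le_trans hq_le hθ1
      have hptl : ∀ r ∈ Set.Ioc p q,
          c₁/(24^n * c₂) * φ'' (μ + ‖z₁‖ + ‖z₂‖) ≤ φ'' (μ + ‖z₁ + r • z₂‖) := by
        intro r hr
        have h8 := hlow8 r hr
        have hx : 0 < μ + ‖z₁ + r • z₂‖ := by linarith [hμ, hb]
        have hle : μ + ‖z₁ + r • z₂‖ ≤ μ + ‖z₁‖ + ‖z₂‖ :=
          hh_leP r (by linarith [hr.1]) (by linarith [hr.2])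
        have h24 : μ + ‖z₁‖ + ‖z₂‖ ≤ 24 * (μ + ‖z₁ + r • z₂‖) := by linarith [hcase, hμ]
        have hcmp := (hcomp 24 (μ + ‖z₁ + r • z₂‖) (μ + ‖z₁‖ + ‖z₂‖) (by norm_num) hx hle h24).2
        rw [div_mul_eq_mul_div, div_le_iff₀ (by positivity)]
        have hmul := mul_le_mul_of_nonneg_left hcmp hc₁.le
        have heq : c₁ * (24^n * c₂ / c₁ * φ'' (μ + ‖z₁ + r • z₂‖))
            = φ'' (μ + ‖z₁ + r • z₂‖) * (24^n * c₂) := by field_simp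
        linarith
      have hsub' : Set.Ioc p q ⊆ Set.Ioc 0 θ := Set.Ioc_subset_Ioc hp0 hq_le
      have hf_nonneg_ae : 0 ≤ᵐ[volume.restrict (Set.Ioc (0:ℝ) θ)]
          fun r => φ'' (μ + ‖z₁ + r • z₂‖) := by
        apply ae_restrict_of_ae
        filter_upwards [hae_pos] with r hr
        exact (hφ''pos _ hr).le
      have t1 : ∫ r in Set.Ioc p q, φ'' (μ + ‖z₁ + r • z₂‖)
          ≤ ∫ r in Set.Ioc (0:ℝ) θ, φ'' (μ + ‖z₁ + r • z₂‖) :=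
        setIntegral_mono_set hfint hf_nonneg_ae (HasSubset.Subset.eventuallyLE hsub')
      have t2 : ∫ r in Set.Ioc p q, (c₁/(24^n * c₂) * φ'' (μ + ‖z₁‖ + ‖z₂‖))
          ≤ ∫ r in Set.Ioc p q, φ'' (μ + ‖z₁ + r • z₂‖) := by
        apply setIntegral_mono_on _ (hfint.mono_set hsub') measurableSet_Ioc hptl
        exact integrableOn_const (by rw [Real.volume_Ioc]; exact ENNReal.ofReal_ne_top)
      rw [setIntegral_const, measureReal_def, Real.volume_Ioc, ENNReal.toReal_ofReal (by linarith), hpq_len,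
        smul_eq_mul] at t2
      calc c₁ / (8 * 24^n * c₂) * φ'' (μ + ‖z₁‖ + ‖z₂‖)
          = 1/8 * (c₁/(24^n * c₂) * φ'' (μ + ‖z₁‖ + ‖z₂‖)) := by ring
        _ ≤ ∫ r in Set.Ioc p q, φ'' (μ + ‖z₁ + r • z₂‖) := t2
        _ ≤ _ := t1
    · -- upper bound
      have s1 : ∫ r in Set.Ioc (0:ℝ) θ, φ'' (μ + ‖z₁ + r • z₂‖)
          ≤ ∫ r in Set.Ioc (0:ℝ) θ, (2^n * c₂ / c₁) * φ'' ((μ + d)/2 + |r - rs| * (‖z₂‖/2)) := by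
        apply integral_mono_ae hfint (hGsmall.const_mul _)
        filter_upwards [hdom] with r hr
        calc φ'' (μ + ‖z₁ + r • z₂‖) ≤ |φ'' (μ + ‖z₁ + r • z₂‖)| := le_abs_self _
          _ = ‖φ'' (μ + ‖z₁ + r • z₂‖)‖ := (Real.norm_eq_abs _).symm
          _ ≤ _ := hr
      have s2 : ∫ r in Set.Ioc (0:ℝ) θ, (2^n * c₂ / c₁) * φ'' ((μ + d)/2 + |r - rs| * (‖z₂‖/2))
          = (2^n * c₂ / c₁) * ∫ r in Set.Ioc (0:ℝ) θ, φ'' ((μ + d)/2 + |r - rs| * (‖z₂‖/2)) :=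
        integral_const_mul _ _
      have s3 : ∫ r in Set.Ioc (0:ℝ) θ, φ'' ((μ + d)/2 + |r - rs| * (‖z₂‖/2))
          ≤ ∫ r in Set.Ioc (rs - (|rs|+1)) (rs + (|rs|+1)), φ'' ((μ + d)/2 + |r - rs| * (‖z₂‖/2)) :=
        setIntegral_mono_set hGbig (ae_restrict_of_ae hG_ae_nonneg)
          (HasSubset.Subset.eventuallyLE hsub_big)
      have s4 : ∫ r in Set.Ioc (rs - (|rs|+1)) (rs + (|rs|+1)), φ'' ((μ + d)/2 + |r - rs| * (‖z₂‖/2))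
          = (∫ r in Set.Ioc (rs - (|rs|+1)) rs, φ'' ((μ + d)/2 + |r - rs| * (‖z₂‖/2)))
            + ∫ r in Set.Ioc rs (rs + (|rs|+1)), φ'' ((μ + d)/2 + |r - rs| * (‖z₂‖/2)) := by
        rw [← setIntegral_union (Set.Ioc_disjoint_Ioc_of_le le_rfl) measurableSet_Ioc hGL hGR,
          Set.Ioc_union_Ioc_eq_Ioc hle1 hle2]
      have s5 : ∫ r in Set.Ioc rs (rs + (|rs|+1)), φ'' ((μ + d)/2 + |r - rs| * (‖z₂‖/2))
          = (φ' ((μ + d)/2 + (|rs|+1) * (‖z₂‖/2)) - φ' ((μ + d)/2)) / (‖z₂‖/2) := by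
        rw [setIntegral_congr_fun measurableSet_Ioc
          (show Set.EqOn (fun r => φ'' ((μ + d)/2 + |r - rs| * (‖z₂‖/2)))
            (fun r => φ'' ((μ + d)/2 + (r - rs) * (‖z₂‖/2))) (Set.Ioc rs (rs + (|rs|+1))) by
            intro r hr
            simp only
            rw [abs_of_nonneg (by linarith [hr.1] : (0:ℝ) ≤ r - rs)])]
        rw [← intervalIntegral.integral_of_le hle2, ftcR.2]
        congr 3
        ring
      have s6 : ∫ r in Set.Ioc (rs - (|rs|+1)) rs, φ'' ((μ + d)/2 + |r - rs| * (‖z₂‖/2))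
          = (φ' ((μ + d)/2 + (|rs|+1) * (‖z₂‖/2)) - φ' ((μ + d)/2)) / (‖z₂‖/2) := by
        rw [setIntegral_congr_fun measurableSet_Ioc
          (show Set.EqOn (fun r => φ'' ((μ + d)/2 + |r - rs| * (‖z₂‖/2)))
            (fun r => φ'' ((μ + d)/2 + (rs - r) * (‖z₂‖/2))) (Set.Ioc (rs - (|rs|+1)) rs) by
            intro r hr
            simp only
            rw [abs_of_nonpos (by linarith [hr.2] : r - rs ≤ 0)]
            ring_nf)]
        rw [← intervalIntegral.integral_of_le hle1, ftcL.2]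
        congr 3
        ring
      have hargP : (μ + d)/2 + (|rs|+1) * (‖z₂‖/2) ≤ μ + ‖z₁‖ + ‖z₂‖ := by
        linarith [hd_z₁, hrs_b, hμ, hb0]
      have hargP0 : 0 ≤ (μ + d)/2 + (|rs|+1) * (‖z₂‖/2) := by
        have := mul_nonneg (by linarith [abs_nonneg rs] : (0:ℝ) ≤ |rs|+1)
          (by linarith : (0:ℝ) ≤ ‖z₂‖/2)
        linarith [hμ, hd0]
      have hφ'le : φ' ((μ + d)/2 + (|rs|+1) * (‖z₂‖/2)) ≤ φ' (μ + ‖z₁‖ + ‖z₂‖) :=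
        hφ'mono (Set.mem_Ici.2 hargP0) (Set.mem_Ici.2 (by linarith)) hargP
      have hφ'A2 : 0 ≤ φ' ((μ + d)/2) := hφ'nonneg _ hA2
      have hupval : (φ' ((μ + d)/2 + (|rs|+1) * (‖z₂‖/2)) - φ' ((μ + d)/2)) / (‖z₂‖/2)
          ≤ φ' (μ + ‖z₁‖ + ‖z₂‖) / (‖z₂‖/2) := by
        gcongr
        linarith
      have hfinal : 2 * (φ' (μ + ‖z₁‖ + ‖z₂‖) / (‖z₂‖/2))
          ≤ 12 * c₂ * φ'' (μ + ‖z₁‖ + ‖z₂‖) := by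
        have h2P := (hequiv _ hP).2
        have hPb : μ + ‖z₁‖ + ‖z₂‖ ≤ 3 * ‖z₂‖ := by linarith
        have key : 4 * φ' (μ + ‖z₁‖ + ‖z₂‖) ≤ 12 * c₂ * φ'' (μ + ‖z₁‖ + ‖z₂‖) * ‖z₂‖ := by
          have step := mul_le_mul_of_nonneg_left
            (mul_le_mul_of_nonneg_right hPb hPpos.le) hc₂.le
          linarith [step, h2P]
        have heq4 : 2 * (φ' (μ + ‖z₁‖ + ‖z₂‖) / (‖z₂‖/2))
            = (4 * φ' (μ + ‖z₁‖ + ‖z₂‖)) / ‖z₂‖ := by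
          rw [div_div_eq_mul_div]
          ring
        rw [heq4, div_le_iff₀ hb]
        exact key
      have hcoeff : (0:ℝ) < 2^n * c₂ / c₁ := by positivity
      calc ∫ r in Set.Ioc (0:ℝ) θ, φ'' (μ + ‖z₁ + r • z₂‖)
          ≤ (2^n * c₂ / c₁) * ∫ r in Set.Ioc (0:ℝ) θ, φ'' ((μ + d)/2 + |r - rs| * (‖z₂‖/2)) := by
            rw [← s2]; exact s1
        _ ≤ (2^n * c₂ / c₁) * (12 * c₂ * φ'' (μ + ‖z₁‖ + ‖z₂‖)) := by
            apply mul_le_mul_of_nonneg_left _ hcoeff.le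
            calc ∫ r in Set.Ioc (0:ℝ) θ, φ'' ((μ + d)/2 + |r - rs| * (‖z₂‖/2))
                ≤ _ := s3
              _ = _ := s4
              _ ≤ 2 * (φ' (μ + ‖z₁‖ + ‖z₂‖) / (‖z₂‖/2)) := by
                  rw [s5, s6]; linarith
              _ ≤ 12 * c₂ * φ'' (μ + ‖z₁‖ + ‖z₂‖) := hfinal
        _ = 12 * 2^n * c₂^2 / c₁ * φ'' (μ + ‖z₁‖ + ‖z₂‖) := by ring
        _ ≤ (3*c₂/c₁ + 12*2^n*c₂^2/c₁) * φ'' (μ + ‖z₁‖ + ‖z₂‖) := by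
            apply mul_le_mul_of_nonneg_right _ hPpos.le
            have hterm : (0:ℝ) ≤ 3*c₂/c₁ := by positivity
            linarith


set_option maxHeartbeats 1000000 in
/-- Under the Assumption (`φ'(t) ∼ t·φ''(t)`):
`∫₀¹∫₀¹ t·φ''(μ+|z₁+stz₂|) ds dt ∼ φ''(μ+|z₁|+|z₂|)`. -/
theorem double_integral_phi'' (φ φ' φ'' : ℝ → ℝ) (hA : SatisfiesAssumption φ φ' φ'')
    (c₁ c₂ : ℝ) (hc₁ : 0 < c₁) (hc₂ : 0 < c₂)
    (hequiv : ∀ t : ℝ, 0 < t → c₁ * (t * φ'' t) ≤ φ' t ∧ φ' t ≤ c₂ * (t * φ'' t)) :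
    ∃ C₁ C₂ : ℝ, 0 < C₁ ∧ 0 < C₂ ∧
      ∀ (N n : ℕ) (z₁ z₂ : EuclideanSpace ℝ (Fin (N * n))) (μ : ℝ),
        0 ≤ μ → 0 < ‖z₁‖ + ‖z₂‖ →
        C₁ * φ'' (μ + ‖z₁‖ + ‖z₂‖) ≤
          (∫ t in (0:ℝ)..1, ∫ s in (0:ℝ)..1, t * φ'' (μ + ‖z₁ + (s * t) • z₂‖)) ∧
        (∫ t in (0:ℝ)..1, ∫ s in (0:ℝ)..1, t * φ'' (μ + ‖z₁ + (s * t) • z₂‖)) ≤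
          C₂ * φ'' (μ + ‖z₁‖ + ‖z₂‖) := by
  have hφ''pos : ∀ t : ℝ, 0 < t → 0 < φ'' t := by
    intro t ht
    have h2 := (hequiv t ht).2
    have := hA.1.2.2.2.2.2.2.1 t ht
    nlinarith [mul_pos hc₂ ht]
  obtain ⟨C₃, C₄, hC₃, hC₄, H⟩ := oneD φ φ' φ'' hA c₁ c₂ hc₁ hc₂ hequiv
  refine ⟨C₃/2, C₄, by linarith, hC₄, ?_⟩
  intro N n z₁ z₂ μ hμ hz
  have hP : 0 < μ + ‖z₁‖ + ‖z₂‖ := by linarith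
  obtain ⟨hint1, hlow1, hup1⟩ := H (N*n) z₁ z₂ μ 1 hμ hP (by norm_num) le_rfl
  obtain ⟨hint2, hlow2, hup2⟩ := H (N*n) z₁ z₂ μ (1/2) hμ hP le_rfl (by norm_num)
  -- a.e. positivity of the argument
  have hz₂cases : ∀ᵐ r : ℝ, 0 < μ + ‖z₁ + r • z₂‖ := by
    rw [ae_iff]
    apply Set.Subsingleton.measure_zero _ volume
    intro r₁ hr₁ r₂ hr₂
    simp only [Set.mem_setOf_eq, not_lt] at hr₁ hr₂
    have e₁ : z₁ + r₁ • z₂ = 0 := by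
      have h0 := norm_nonneg (z₁ + r₁ • z₂)
      exact norm_eq_zero.1 (le_antisymm (by linarith) h0)
    have e₂ : z₁ + r₂ • z₂ = 0 := by
      have h0 := norm_nonneg (z₁ + r₂ • z₂)
      exact norm_eq_zero.1 (le_antisymm (by linarith) h0)
    have hsm : (r₁ - r₂) • z₂ = 0 := by
      calc (r₁ - r₂) • z₂ = (z₁ + r₁ • z₂) - (z₁ + r₂ • z₂) := by rw [sub_smul]; abel
        _ = 0 := by rw [e₁, e₂, sub_self]
    rcases smul_eq_zero.1 hsm with hh | hh
    · exact sub_eq_zero.1 hh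
    · -- z₂ = 0 ⇒ z₁ = 0 ⇒ contradiction with 0 < ‖z₁‖+‖z₂‖
      exfalso
      have hz₁ : z₁ = 0 := by
        have : z₁ + r₁ • z₂ = z₁ := by rw [hh, smul_zero, add_zero]
        rw [← this, e₁]
      rw [hz₁, hh] at hz
      simp at hz
  have hae0 : ∀ᵐ r : ℝ, 0 ≤ φ'' (μ + ‖z₁ + r • z₂‖) := by
    filter_upwards [hz₂cases] with r hr
    exact (hφ''pos _ hr).le
  -- interval integrability of f on subintervals of [0,1]
  have hII : ∀ t₁ t₂ : ℝ, 0 ≤ t₁ → t₁ ≤ t₂ → t₂ ≤ 1 →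
      IntervalIntegrable (fun r => φ'' (μ + ‖z₁ + r • z₂‖)) volume t₁ t₂ := by
    intro t₁ t₂ h1 h12 h2
    exact (intervalIntegrable_iff_integrableOn_Ioc_of_le h12).2
      (hint1.mono_set (Set.Ioc_subset_Ioc h1 h2))
  -- F is monotone on [0,1]
  have hFmono : MonotoneOn (fun t => ∫ r in (0:ℝ)..t, φ'' (μ + ‖z₁ + r • z₂‖))
      (Set.Icc 0 1) := by
    intro t₁ ht₁ t₂ ht₂ h12
    have hadd := intervalIntegral.integral_add_adjacent_intervals
      (hII 0 t₁ le_rfl ht₁.1 ht₁.2) (hII t₁ t₂ ht₁.1 h12 ht₂.2)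
    have hnn : 0 ≤ ∫ r in t₁..t₂, φ'' (μ + ‖z₁ + r • z₂‖) :=
      intervalIntegral.integral_nonneg_of_ae h12 hae0
    simp only
    linarith [hadd]
  have hFnn : ∀ t ∈ Set.Icc (0:ℝ) 1, 0 ≤ ∫ r in (0:ℝ)..t, φ'' (μ + ‖z₁ + r • z₂‖) :=
    fun t ht => intervalIntegral.integral_nonneg_of_ae ht.1 hae0
  have huicc : Set.uIcc (0:ℝ) 1 = Set.Icc 0 1 := Set.uIcc_of_le (by norm_num)
  have hFii : IntervalIntegrable (fun t => ∫ r in (0:ℝ)..t, φ'' (μ + ‖z₁ + r • z₂‖))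
      volume 0 1 := MonotoneOn.intervalIntegrable (huicc ▸ hFmono)
  -- the inner integral equals F t
  have hinner_eq : ∀ t ∈ Set.uIcc (0:ℝ) 1,
      (∫ s in (0:ℝ)..1, t * φ'' (μ + ‖z₁ + (s * t) • z₂‖))
        = ∫ r in (0:ℝ)..t, φ'' (μ + ‖z₁ + r • z₂‖) := by
    intro t ht
    rw [huicc] at ht
    rcases eq_or_lt_of_le ht.1 with h0 | h0
    · rw [← h0]
      simp
    · rw [intervalIntegral.integral_const_mul,
        intervalIntegral.integral_comp_mul_right (fun u => φ'' (μ + ‖z₁ + u • z₂‖))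
          (ne_of_gt h0)]
      simp only [zero_mul, one_mul, smul_eq_mul]
      rw [← mul_assoc, mul_inv_cancel₀ (ne_of_gt h0), one_mul]
  have houter : (∫ t in (0:ℝ)..1, ∫ s in (0:ℝ)..1, t * φ'' (μ + ‖z₁ + (s * t) • z₂‖))
      = ∫ t in (0:ℝ)..1, ∫ r in (0:ℝ)..t, φ'' (μ + ‖z₁ + r • z₂‖) :=
    intervalIntegral.integral_congr hinner_eq
  have hF1 : (∫ r in (0:ℝ)..1, φ'' (μ + ‖z₁ + r • z₂‖))
      = ∫ r in Set.Ioc (0:ℝ) 1, φ'' (μ + ‖z₁ + r • z₂‖) :=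
    intervalIntegral.integral_of_le (by norm_num)
  have hFhalf : (∫ r in (0:ℝ)..(1/2), φ'' (μ + ‖z₁ + r • z₂‖))
      = ∫ r in Set.Ioc (0:ℝ) (1/2), φ'' (μ + ‖z₁ + r • z₂‖) :=
    intervalIntegral.integral_of_le (by norm_num)
  constructor
  · -- lower bound
    rw [houter]
    have hmono1 : Set.uIcc (0:ℝ) (1/2) ⊆ Set.uIcc (0:ℝ) 1 := by
      rw [huicc, Set.uIcc_of_le (by norm_num : (0:ℝ) ≤ 1/2)]
      exact Set.Icc_subset_Icc le_rfl (by norm_num)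
    have hmono2 : Set.uIcc (1/2:ℝ) 1 ⊆ Set.uIcc (0:ℝ) 1 := by
      rw [huicc, Set.uIcc_of_le (by norm_num : (1/2:ℝ) ≤ 1)]
      exact Set.Icc_subset_Icc (by norm_num) le_rfl
    have hsplit := intervalIntegral.integral_add_adjacent_intervals
      (hFii.mono_set hmono1) (hFii.mono_set hmono2)
    have hp1 : 0 ≤ ∫ t in (0:ℝ)..(1/2), ∫ r in (0:ℝ)..t, φ'' (μ + ‖z₁ + r • z₂‖) := by
      apply intervalIntegral.integral_nonneg (by norm_num)
      intro t ht
      exact hFnn t (Set.Icc_subset_Icc le_rfl (by norm_num) ht)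
    have hp2 : (1/2) * (C₃ * φ'' (μ + ‖z₁‖ + ‖z₂‖))
        ≤ ∫ t in (1/2:ℝ)..1, ∫ r in (0:ℝ)..t, φ'' (μ + ‖z₁ + r • z₂‖) := by
      have hc : ∀ t ∈ Set.Icc (1/2:ℝ) 1,
          C₃ * φ'' (μ + ‖z₁‖ + ‖z₂‖) ≤ ∫ r in (0:ℝ)..t, φ'' (μ + ‖z₁ + r • z₂‖) := by
        intro t ht
        have hm := hFmono (Set.mem_Icc.2 ⟨by norm_num, by norm_num⟩)
          (Set.mem_Icc.2 ⟨by linarith [ht.1], ht.2⟩) ht.1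
        simp only at hm
        rw [hFhalf] at hm
        exact le_trans hlow2 hm
      have := intervalIntegral.integral_mono_on (by norm_num : (1/2:ℝ) ≤ 1)
        (intervalIntegrable_const)
        (hFii.mono_set hmono2)
        hc
      rw [intervalIntegral.integral_const, smul_eq_mul] at this
      calc (1/2) * (C₃ * φ'' (μ + ‖z₁‖ + ‖z₂‖))
          = (1 - 1/2) * (C₃ * φ'' (μ + ‖z₁‖ + ‖z₂‖)) := by norm_num
        _ ≤ _ := this
    calc C₃/2 * φ'' (μ + ‖z₁‖ + ‖z₂‖) = (1/2) * (C₃ * φ'' (μ + ‖z₁‖ + ‖z₂‖)) := by ring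
      _ ≤ _ := by linarith [hsplit, hp1, hp2]
  · -- upper bound
    rw [houter]
    have hFle : ∀ t ∈ Set.Icc (0:ℝ) 1,
        (∫ r in (0:ℝ)..t, φ'' (μ + ‖z₁ + r • z₂‖))
          ≤ ∫ r in (0:ℝ)..1, φ'' (μ + ‖z₁ + r • z₂‖) := by
      intro t ht
      have := hFmono ht (Set.mem_Icc.2 ⟨by norm_num, le_rfl⟩) ht.2
      simpa using this
    have := intervalIntegral.integral_mono_on (by norm_num : (0:ℝ) ≤ 1)
      hFii intervalIntegrable_const hFle
    rw [intervalIntegral.integral_const, smul_eq_mul] at this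
    calc (∫ t in (0:ℝ)..1, ∫ r in (0:ℝ)..t, φ'' (μ + ‖z₁ + r • z₂‖))
        ≤ (1 - 0) * ∫ r in (0:ℝ)..1, φ'' (μ + ‖z₁ + r • z₂‖) := this
      _ = ∫ r in Set.Ioc (0:ℝ) 1, φ'' (μ + ‖z₁ + r • z₂‖) := by rw [hF1]; ring
      _ ≤ C₄ * φ'' (μ + ‖z₁‖ + ‖z₂‖) := hup1
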